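/- The convolution product on the R-module of H-invariant maps from G/H to A, defined by (φ * ψ)(gH) = Σ_{kH ∈ G/H} φ(kH) · α_k(ψ(k⁻¹gH)), is well-defined (independent of the choice of coset representatives) and associative. -/
import Mathlib


open scoped BigOperators

/-- `φ : G/H → A` is `H`-invariant: `φ(hgH) = α_h (φ(gH))`. -/
def SkewHecke.IsInv {R A G : Type*} [CommRing R] [Ring A] [Algebra R A] [Group G]
    (H : Subgroup G) (α : G →* (A ≃ₐ[R] A)) (φ : G ⧸ H → A) : Prop :=
  ∀ h ∈ H, ∀ g : G, φ (QuotientGroup.mk (h * g)) = α h (φ (QuotientGroup.mk g))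

/-- `s` is a choice of coset representatives. -/
def SkewHecke.IsSection {G : Type*} [Group G] {H : Subgroup G} (s : G ⧸ H → G) : Prop :=
  ∀ c : G ⧸ H, QuotientGroup.mk (s c) = c

/-- The convolution product, defined using the coset representatives `s`:
`(φ * ψ)(gH) = Σ_{kH} φ(kH) · α_k (ψ(k⁻¹gH))`. -/
noncomputable def SkewHecke.conv {R A G : Type*} [CommRing R] [Ring A] [Algebra R A] [Group G]
    (H : Subgroup G) [Fintype (G ⧸ H)] (α : G →* (A ≃ₐ[R] A))
    (s : G ⧸ H → G) (φ ψ : G ⧸ H → A) : G ⧸ H → A :=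
  fun x => ∑ c : G ⧸ H, φ c * α (s c) (ψ ((s c)⁻¹ • x))

/-- `α` of a product, applied to an element. -/
lemma SkewHecke.alpha_mul {R A G : Type*} [CommRing R] [Ring A] [Algebra R A] [Group G]
    (α : G →* (A ≃ₐ[R] A)) (a b : G) (z : A) :
    α (a * b) z = α a (α b z) := by
  rw [map_mul]; rfl

/-- An `H`-invariant map satisfies `ψ (h • y) = α h (ψ y)` for `h ∈ H`. -/
lemma SkewHecke.isInv_smul {R A G : Type*} [CommRing R] [Ring A] [Algebra R A] [Group G]
    {H : Subgroup G} {α : G →* (A ≃ₐ[R] A)} {ψ : G ⧸ H → A}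
    (hψ : SkewHecke.IsInv H α ψ) {h : G} (hh : h ∈ H) (y : G ⧸ H) :
    ψ (h • y) = α h (ψ y) := by
  induction y using QuotientGroup.induction_on with
  | H g => exact hψ h hh g

/-- The convolution term depends only on the coset of the representative. -/
lemma SkewHecke.term_indep {R A G : Type*} [CommRing R] [Ring A] [Algebra R A] [Group G]
    {H : Subgroup G} {α : G →* (A ≃ₐ[R] A)} {ψ : G ⧸ H → A}
    (hψ : SkewHecke.IsInv H α ψ) {g g' : G}
    (hgg : (QuotientGroup.mk g : G ⧸ H) = QuotientGroup.mk g') (x : G ⧸ H) :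
    (α g) (ψ (g⁻¹ • x)) = (α g') (ψ (g'⁻¹ • x)) := by
  have hk : g⁻¹ * g' ∈ H := QuotientGroup.eq.mp hgg
  have hg' : g' = g * (g⁻¹ * g') := by group
  rw [hg', mul_inv_rev, mul_smul, SkewHecke.isInv_smul hψ (inv_mem hk),
    ← SkewHecke.alpha_mul, mul_inv_cancel_right]

/-- The convolution product on `Maps(G/H,A)^H` is independent of the choice of coset
representatives, preserves `H`-invariance, and is associative. -/
theorem skewHecke_conv_wellDefined_assoc {R A G : Type*} [CommRing R] [Ring A] [Algebra R A]
    [Group G] (H : Subgroup G) [Fintype (G ⧸ H)] (α : G →* (A ≃ₐ[R] A))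
    (s t : G ⧸ H → G) (hs : SkewHecke.IsSection s) (ht : SkewHecke.IsSection t)
    (φ ψ χ : G ⧸ H → A) (hφ : SkewHecke.IsInv H α φ) (hψ : SkewHecke.IsInv H α ψ)
    (hχ : SkewHecke.IsInv H α χ) :
    SkewHecke.conv H α s φ ψ = SkewHecke.conv H α t φ ψ ∧
    SkewHecke.IsInv H α (SkewHecke.conv H α s φ ψ) ∧
    SkewHecke.conv H α s (SkewHecke.conv H α s φ ψ) χ =
      SkewHecke.conv H α s φ (SkewHecke.conv H α s ψ χ) := by
  refine ⟨?_, ?_, ?_⟩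
  · funext x
    refine Finset.sum_congr rfl fun c _ => ?_
    rw [SkewHecke.term_indep hψ (g := s c) (g' := t c) (by rw [hs c, ht c]) x]
  · intro h hh g
    show (∑ c : G ⧸ H, φ c * α (s c) (ψ ((s c)⁻¹ • (QuotientGroup.mk (h * g) : G ⧸ H)))) =
      α h (∑ c : G ⧸ H, φ c * α (s c) (ψ ((s c)⁻¹ • (QuotientGroup.mk g : G ⧸ H))))
    rw [map_sum]
    refine Fintype.sum_equiv (MulAction.toPerm h⁻¹) _ _ fun c => ?_
    show φ c * (α (s c)) (ψ ((s c)⁻¹ • (QuotientGroup.mk (h * g) : G ⧸ H))) =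
      (α h) (φ (h⁻¹ • c) *
        (α (s (h⁻¹ • c))) (ψ ((s (h⁻¹ • c))⁻¹ • (QuotientGroup.mk g : G ⧸ H))))
    rw [map_mul]
    have hφc : (α h) (φ (h⁻¹ • c)) = φ c := by
      rw [← SkewHecke.isInv_smul hφ hh, smul_inv_smul]
    have hc : (QuotientGroup.mk (s c) : G ⧸ H) = QuotientGroup.mk (h * s (h⁻¹ • c)) := by
      show _ = h • (QuotientGroup.mk (s (h⁻¹ • c)) : G ⧸ H)
      rw [hs, hs, smul_inv_smul]
    have hterm : (α (s c)) (ψ ((s c)⁻¹ • (QuotientGroup.mk (h * g) : G ⧸ H))) =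
        (α h) ((α (s (h⁻¹ • c))) (ψ ((s (h⁻¹ • c))⁻¹ • (QuotientGroup.mk g : G ⧸ H)))) := by
      rw [SkewHecke.term_indep hψ hc, ← SkewHecke.alpha_mul]
      congr 2
      rw [mul_inv_rev, mul_smul]
      congr 1
      show (QuotientGroup.mk (h⁻¹ * (h * g)) : G ⧸ H) = QuotientGroup.mk g
      congr 1; group
    rw [hφc, hterm]
  · funext x
    show (∑ c : G ⧸ H, (∑ d : G ⧸ H, φ d * α (s d) (ψ ((s d)⁻¹ • c))) *
        α (s c) (χ ((s c)⁻¹ • x))) =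
      ∑ d : G ⧸ H, φ d * α (s d) (∑ e : G ⧸ H, ψ e * α (s e) (χ ((s e)⁻¹ • ((s d)⁻¹ • x))))
    simp_rw [Finset.sum_mul, map_sum, Finset.mul_sum]
    rw [Finset.sum_comm]
    refine Finset.sum_congr rfl fun d _ => ?_
    refine Fintype.sum_equiv (MulAction.toPerm (s d)⁻¹) _ _ fun c => ?_
    show φ d * (α (s d)) (ψ ((s d)⁻¹ • c)) * (α (s c)) (χ ((s c)⁻¹ • x)) =
      φ d * (α (s d)) (ψ ((s d)⁻¹ • c) *
        (α (s ((s d)⁻¹ • c))) (χ ((s ((s d)⁻¹ • c))⁻¹ • ((s d)⁻¹ • x))))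
    rw [map_mul, mul_assoc]
    congr 1
    congr 1
    have hc : (QuotientGroup.mk (s c) : G ⧸ H) =
        QuotientGroup.mk (s d * s ((s d)⁻¹ • c)) := by
      show _ = (s d) • (QuotientGroup.mk (s ((s d)⁻¹ • c)) : G ⧸ H)
      rw [hs, hs, smul_inv_smul]
    rw [SkewHecke.term_indep hχ hc, ← SkewHecke.alpha_mul, mul_inv_rev, mul_smul]
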